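/- Let X_n be a Binomial random variable with n trials and success probability p_n = a·n^{λ−1} for fixed constants a > 0 and λ ∈ (0,1). Then for every δ > 0 and every λ̃ > 0 with λ̃ < λ, we have n^δ · P(X_n ≤ a·n^{λ̃}) → 0 as n → ∞. -/

import Mathlib

open Filter MeasureTheory
open scoped ENNReal NNReal

/-- The binomial `PMF` with an `ℝ≥0∞` success probability, as `PMF.binomial` was defined in
Mathlib of December 2024 (the current `PMF.binomial` takes `p : ℝ≥0` and is deprecated). -/
noncomputable def PMF.binomialENNReal (p : ℝ≥0∞) (h : p ≤ 1) (n : ℕ) : PMF (Fin (n + 1)) :=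
  .ofFintype (fun i => p ^ (i : ℕ) * (1 - p) ^ ((Fin.last n - i) : ℕ) * (n.choose i : ℕ)) (by
    convert (add_pow p (1 - p) n).symm
    · rw [Finset.sum_fin_eq_sum_range]
      apply Finset.sum_congr rfl
      intro i hi
      rw [Finset.mem_range] at hi
      rw [dif_pos hi, Fin.last]
    · simp [h])

/-- Lemma A.6 (binomial lower tail): if `X_n ~ Binomial(n, p_n)` with
`p_n = a·n^{λ-1}` (for large `n`), `a > 0`, `λ ∈ (0,1)`, then for every `δ > 0`
and `0 < λ̃ < λ`, `n^δ · P(X_n ≤ a·n^{λ̃}) → 0`. -/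
theorem binomial_lower_tail_superpoly
    (a lam lamt delta : ℝ) (ha : 0 < a) (hlam : lam ∈ Set.Ioo (0:ℝ) 1)
    (hlamt : 0 < lamt) (hlt : lamt < lam) (hdelta : 0 < delta)
    (p : ℕ → ℝ≥0∞) (hp : ∀ n, p n ≤ 1)
    (hpval : ∀ᶠ n : ℕ in atTop, (p n).toReal = a * (n : ℝ) ^ (lam - 1) ∧ (p n) ≠ ⊤) :
    Tendsto
      (fun n : ℕ =>
        (n : ℝ) ^ delta *
          (∑ k : Fin (n + 1),
            if (k : ℝ) ≤ a * (n : ℝ) ^ lamt then ((PMF.binomialENNReal (p n) (hp n) n) k).toReal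
            else 0))
      atTop (nhds 0) := by
  obtain ⟨hlam0, hlam1⟩ := hlam
  -- the exponential upper bound
  set G : ℕ → ℝ := fun n => Real.log n * (delta + 2) +
      (a * (n:ℝ) ^ lamt * Real.log (a * (n:ℝ) ^ lam)
        - ((n:ℝ) - a * (n:ℝ) ^ lamt) * (a * (n:ℝ) ^ (lam - 1))) with hGdef
  -- auxiliary limits
  have hcast : Tendsto (fun n : ℕ => (n:ℝ)) atTop atTop := tendsto_natCast_atTop_atTop
  have h1 : Tendsto (fun n : ℕ => Real.log n / (n:ℝ) ^ lam) atTop (nhds 0) :=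
    ((isLittleO_log_rpow_atTop hlam0).tendsto_div_nhds_zero).comp hcast
  have h2 : Tendsto (fun n : ℕ => Real.log n / (n:ℝ) ^ (lam - lamt)) atTop (nhds 0) :=
    ((isLittleO_log_rpow_atTop (by linarith)).tendsto_div_nhds_zero).comp hcast
  have h3 : Tendsto (fun n : ℕ => (n:ℝ) ^ (lamt - lam)) atTop (nhds 0) := by
    have := (tendsto_rpow_neg_atTop (show 0 < lam - lamt by linarith)).comp hcast
    simpa [neg_sub, Function.comp_def] using this
  have h4 : Tendsto (fun n : ℕ => (n:ℝ) ^ (lamt - 1)) atTop (nhds 0) := by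
    have := (tendsto_rpow_neg_atTop (show 0 < 1 - lamt by linarith)).comp hcast
    simpa [neg_sub, Function.comp_def] using this
  -- the normalized function H tends to -a
  have hH : Tendsto (fun n : ℕ =>
      (delta + 2) * (Real.log n / (n:ℝ) ^ lam) + a * Real.log a * (n:ℝ) ^ (lamt - lam)
        + a * lam * (Real.log n / (n:ℝ) ^ (lam - lamt)) + a ^ 2 * (n:ℝ) ^ (lamt - 1) - a)
      atTop (nhds (-a)) := by
    have := ((((h1.const_mul (delta + 2)).add (h3.const_mul (a * Real.log a))).add
      (h2.const_mul (a * lam))).add (h4.const_mul (a ^ 2))).sub_const a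
    simpa using this
  have hnl : Tendsto (fun n : ℕ => (n:ℝ) ^ lam) atTop atTop :=
    (tendsto_rpow_atTop hlam0).comp hcast
  have hGbot : Tendsto G atTop atBot := by
    refine (hnl.atTop_mul_neg (show -a < 0 by linarith) hH).congr' ?_
    filter_upwards [eventually_ge_atTop 1] with n hn
    have hx : (0:ℝ) < n := by exact_mod_cast Nat.lt_of_lt_of_le Nat.zero_lt_one hn
    have hxlam : (0:ℝ) < (n:ℝ) ^ lam := Real.rpow_pos_of_pos hx lam
    have hxlamt : (0:ℝ) < (n:ℝ) ^ lamt := Real.rpow_pos_of_pos hx lamt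
    have hlog : Real.log (a * (n:ℝ) ^ lam) = Real.log a + lam * Real.log n := by
      rw [Real.log_mul ha.ne' hxlam.ne', Real.log_rpow hx]
    have e1 : (n:ℝ) ^ (lamt - lam) = (n:ℝ) ^ lamt / (n:ℝ) ^ lam := Real.rpow_sub hx _ _
    have e2 : (n:ℝ) ^ (lam - lamt) = (n:ℝ) ^ lam / (n:ℝ) ^ lamt := Real.rpow_sub hx _ _
    have e3 : (n:ℝ) ^ (lamt - 1) = (n:ℝ) ^ lamt / (n:ℝ) := by
      rw [Real.rpow_sub hx, Real.rpow_one]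
    have e4 : (n:ℝ) ^ (lam - 1) = (n:ℝ) ^ lam / (n:ℝ) := by
      rw [Real.rpow_sub hx, Real.rpow_one]
    simp only [hGdef, hlog, e1, e2, e3, e4]
    field_simp
    ring
  -- the sum is nonnegative
  have hf0 : ∀ n : ℕ, 0 ≤ (n : ℝ) ^ delta *
      (∑ k : Fin (n + 1),
        if (k : ℝ) ≤ a * (n : ℝ) ^ lamt then ((PMF.binomialENNReal (p n) (hp n) n) k).toReal
        else 0) := by
    intro n
    refine mul_nonneg (Real.rpow_nonneg (Nat.cast_nonneg n) _) (Finset.sum_nonneg ?_)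
    intro k _
    split <;> simp [ENNReal.toReal_nonneg]
  -- eventual smallness of q and largeness of nq
  have hqsmall : ∀ᶠ n : ℕ in atTop, a * (n:ℝ) ^ (lam - 1) < 1 := by
    have : Tendsto (fun n : ℕ => a * (n:ℝ) ^ (lam - 1)) atTop (nhds (a * 0)) := by
      refine Tendsto.const_mul a ?_
      have := (tendsto_rpow_neg_atTop (show 0 < 1 - lam by linarith)).comp hcast
      simpa [neg_sub, Function.comp_def] using this
    rw [mul_zero] at this
    exact this.eventually_lt_const one_pos
  have hnqbig : ∀ᶠ n : ℕ in atTop, 1 ≤ a * (n:ℝ) ^ lam := by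
    have : Tendsto (fun n : ℕ => a * (n:ℝ) ^ lam) atTop atTop := hnl.const_mul_atTop ha
    exact this.eventually_ge_atTop 1
  -- the main bound
  have hfle : ∀ᶠ n : ℕ in atTop,
      (n : ℝ) ^ delta *
        (∑ k : Fin (n + 1),
          if (k : ℝ) ≤ a * (n : ℝ) ^ lamt then ((PMF.binomialENNReal (p n) (hp n) n) k).toReal
          else 0) ≤ Real.exp (G n) := by
    filter_upwards [hpval, hqsmall, hnqbig, eventually_ge_atTop 2] with n hpv hq1 hnq hn2
    obtain ⟨hpv, hpt⟩ := hpv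
    have hx : (0:ℝ) < n := by
      have : (2:ℝ) ≤ n := by exact_mod_cast hn2
      linarith
    set x : ℝ := (n:ℝ) with hxdef
    set q : ℝ := a * x ^ (lam - 1) with hqdef
    set M : ℝ := a * x ^ lamt with hMdef
    set B : ℝ := Real.exp (M * Real.log (a * x ^ lam) - (x - M) * q) with hBdef
    have hq0 : 0 < q := by rw [hqdef]; positivity
    have h1q : 0 < 1 - q := by rw [hqdef]; linarith
    have hb0 : 0 < a * x ^ lam := by positivity
    have hqx : q * x = a * x ^ lam := by
      rw [hqdef, mul_assoc, ← Real.rpow_add_one hx.ne' (lam - 1)]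
      ring_nf
    -- each summand is at most B
    have hterm : ∀ k : Fin (n + 1),
        (if (k : ℝ) ≤ a * x ^ lamt then ((PMF.binomialENNReal (p n) (hp n) n) k).toReal else 0) ≤ B := by
      intro k
      split
      case isFalse => positivity
      case isTrue hk =>
        have hk : (k : ℝ) ≤ M := hk
        have hkn : (k : ℕ) ≤ n := Nat.lt_succ_iff.mp k.isLt
        have h1p : (1 - p n).toReal = 1 - q := by
          rw [ENNReal.toReal_sub_of_le (hp n) ENNReal.one_ne_top, ENNReal.toReal_one, hpv, hqdef]
        rw [PMF.binomialENNReal, PMF.ofFintype_apply, Fin.val_last, ENNReal.toReal_mul, ENNReal.toReal_mul,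
          ENNReal.toReal_pow, ENNReal.toReal_pow, h1p, hpv, ENNReal.toReal_natCast]
        have hc : ((n.choose (k : ℕ)) : ℝ) ≤ x ^ (k : ℕ) := by
          rw [hxdef]; exact_mod_cast Nat.choose_le_pow n (k : ℕ)
        have e5 : (a * x ^ lam) ^ (k : ℕ) ≤ Real.exp (M * Real.log (a * x ^ lam)) := by
          have e : (a * x ^ lam) ^ (k : ℕ) = Real.exp (Real.log (a * x ^ lam) * (k : ℝ)) := by
            rw [← Real.rpow_natCast (a * x ^ lam) (k : ℕ), Real.rpow_def_of_pos hb0]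
          rw [e, Real.exp_le_exp]
          nlinarith [Real.log_nonneg hnq, hk]
        have e6 : (1 - q) ^ (n - (k : ℕ)) ≤ Real.exp (-(x - M) * q) := by
          have e : (1 - q) ^ (n - (k : ℕ)) = Real.exp (Real.log (1 - q) * ((n - (k : ℕ) : ℕ) : ℝ)) := by
            rw [← Real.rpow_natCast (1 - q) (n - (k : ℕ)), Real.rpow_def_of_pos h1q]
          rw [e, Real.exp_le_exp]
          have hlog1 : Real.log (1 - q) ≤ -q := by
            have := Real.log_le_sub_one_of_pos h1q; linarith
          have hnk : ((n - (k : ℕ) : ℕ) : ℝ) = x - (k : ℝ) := by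
            push_cast [Nat.cast_sub hkn]; ring
          calc Real.log (1 - q) * ((n - (k : ℕ) : ℕ) : ℝ)
              ≤ (-q) * ((n - (k : ℕ) : ℕ) : ℝ) := by
                have hnn : (0:ℝ) ≤ ((n - (k : ℕ) : ℕ) : ℝ) := Nat.cast_nonneg _
                nlinarith [hnn, hlog1]
            _ = -(x - (k : ℝ)) * q := by rw [hnk]; ring
            _ ≤ -(x - M) * q := by
                have h := mul_le_mul_of_nonneg_right (sub_le_sub_left hk x) hq0.le
                linarith
        calc q ^ (k : ℕ) * (1 - q) ^ (n - (k : ℕ)) * ((n.choose (k : ℕ)) : ℝ)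
            ≤ q ^ (k : ℕ) * (1 - q) ^ (n - (k : ℕ)) * x ^ (k : ℕ) :=
              mul_le_mul_of_nonneg_left hc (by positivity)
          _ = (a * x ^ lam) ^ (k : ℕ) * (1 - q) ^ (n - (k : ℕ)) := by
              rw [← hqx, mul_pow]; ring
          _ ≤ Real.exp (M * Real.log (a * x ^ lam)) * Real.exp (-(x - M) * q) :=
              mul_le_mul e5 e6 (by positivity) (Real.exp_nonneg _)
          _ = B := by rw [← Real.exp_add, hBdef]; congr 1; ring
    have hsum : (∑ k : Fin (n + 1),
        if (k : ℝ) ≤ a * x ^ lamt then ((PMF.binomialENNReal (p n) (hp n) n) k).toReal else 0)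
        ≤ (x + 1) * B := by
      calc (∑ k : Fin (n + 1),
          if (k : ℝ) ≤ a * x ^ lamt then ((PMF.binomialENNReal (p n) (hp n) n) k).toReal else 0)
          ≤ ∑ _k : Fin (n + 1), B := Finset.sum_le_sum fun k _ => hterm k
        _ = (x + 1) * B := by
            rw [Finset.sum_const, Finset.card_univ, Fintype.card_fin, nsmul_eq_mul, hxdef]
            push_cast; ring
    have hx2 : x + 1 ≤ x ^ (2:ℝ) := by
      have h2x : (2:ℝ) ≤ x := by rw [hxdef]; exact_mod_cast hn2
      have e : x ^ (2:ℝ) = x * x := by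
        rw [show (2:ℝ) = ((2:ℕ):ℝ) by norm_num, Real.rpow_natCast]; ring
      rw [e]; nlinarith
    calc x ^ delta * (∑ k : Fin (n + 1),
        if (k : ℝ) ≤ a * x ^ lamt then ((PMF.binomialENNReal (p n) (hp n) n) k).toReal else 0)
        ≤ x ^ delta * ((x + 1) * B) :=
          mul_le_mul_of_nonneg_left hsum (Real.rpow_nonneg hx.le _)
      _ ≤ x ^ delta * (x ^ (2:ℝ) * B) := by
          have : (x + 1) * B ≤ x ^ (2:ℝ) * B :=
            mul_le_mul_of_nonneg_right hx2 (Real.exp_nonneg _)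
          exact mul_le_mul_of_nonneg_left this (Real.rpow_nonneg hx.le _)
      _ = Real.exp (G n) := by
          rw [hGdef, Real.rpow_def_of_pos hx delta, Real.rpow_def_of_pos hx 2, hBdef,
            ← Real.exp_add, ← Real.exp_add]
          congr 1
          ring
  exact squeeze_zero' (Eventually.of_forall hf0) hfle (Real.tendsto_exp_atBot.comp hGbot)
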